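/- Let g(x) = (y * z^x / x^α)^x for fixed y > 0, z > 0, α > 0 and x > 0. If x is a critical point of g (i.e., a zero of the derivative of ln g), then g(x) = h(x), where h(x) = (y * (e/x)^α)^(x/2). -/

import Mathlib

open Real

/-- If `x > 0` is a critical point of `g(x) = (y z^x / x^α)^x` (i.e. a zero of the
derivative of `ln g`), then `g(x) = h(x)` where `h(x) = (y (e/x)^α)^(x/2)`. -/
theorem stmt_4 (y z α : ℝ) (hy : 0 < y) (hz : 0 < z) (hα : 0 < α) (x : ℝ) (hx : 0 < x)
    (hcrit : HasDerivAt (fun t : ℝ => Real.log ((y * z ^ t / t ^ α) ^ t)) 0 x) :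
    (y * z ^ x / x ^ α) ^ x = (y * (Real.exp 1 / x) ^ α) ^ (x / 2) := by
  have hx' : x ≠ 0 := ne_of_gt hx
  set f : ℝ → ℝ := fun t => t * (Real.log y + t * Real.log z - α * Real.log t) with hf
  have hE : (fun t : ℝ => Real.log ((y * z ^ t / t ^ α) ^ t)) =ᶠ[nhds x] f := by
    filter_upwards [eventually_gt_nhds hx] with t ht
    have hb : 0 < y * z ^ t / t ^ α := by positivity
    have h1 : (0:ℝ) < y * z ^ t := by positivity
    have h2 : (0:ℝ) < t ^ α := by positivity
    have h3 : (0:ℝ) < z ^ t := by positivity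
    rw [Real.log_rpow hb, hf]
    simp only
    rw [Real.log_div h1.ne' h2.ne',
      Real.log_mul hy.ne' h3.ne', Real.log_rpow hz, Real.log_rpow ht]
  have hder : HasDerivAt f (Real.log y + 2 * x * Real.log z - α * Real.log x - α) x := by
    have h1 : HasDerivAt (fun t : ℝ => Real.log y + t * Real.log z - α * Real.log t)
        (Real.log z - α * (1 / x)) x := by
      have ha := ((hasDerivAt_id x).mul_const (Real.log z)).const_add (Real.log y)
      have hb := (Real.hasDerivAt_log hx').const_mul α
      have := ha.sub hb
      refine this.congr_deriv ?_
      simp [one_div]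
    have := (hasDerivAt_id x).mul h1
    refine this.congr_deriv ?_
    simp only [id]
    field_simp
    ring
  have h0 : Real.log y + 2 * x * Real.log z - α * Real.log x - α = 0 :=
    hder.unique (hcrit.congr_of_eventuallyEq hE.symm)
  have hbx : 0 < y * z ^ x / x ^ α := by positivity
  have hcx : 0 < y * (Real.exp 1 / x) ^ α := by positivity
  rw [Real.rpow_def_of_pos hbx, Real.rpow_def_of_pos hcx]
  congr 1
  have lb : Real.log (y * z ^ x / x ^ α) = Real.log y + x * Real.log z - α * Real.log x := by
    have h1 : (0:ℝ) < y * z ^ x := by positivity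
    have h2 : (0:ℝ) < x ^ α := by positivity
    have h3 : (0:ℝ) < z ^ x := by positivity
    rw [Real.log_div h1.ne' h2.ne', Real.log_mul hy.ne' h3.ne', Real.log_rpow hz,
      Real.log_rpow hx]
  have lc : Real.log (y * (Real.exp 1 / x) ^ α) = Real.log y + α * (1 - Real.log x) := by
    have h1 : (0:ℝ) < (Real.exp 1 / x) ^ α := by positivity
    have h2 : (0:ℝ) < Real.exp 1 / x := by positivity
    rw [Real.log_mul hy.ne' h1.ne', Real.log_rpow h2,
      Real.log_div (Real.exp_pos 1).ne' hx', Real.log_exp]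
  rw [lb, lc]
  linear_combination (x / 2) * h0
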